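/- In ℤ[S_3], the Dunkl elements θ_j = -Σ_{i<j}[ij] + Σ_{k>j}[jk] (as operators via the Bruhat representation) commute pairwise: θ_1θ_2 = θ_2θ_1, θ_1θ_3 = θ_3θ_1, θ_2θ_3 = θ_3θ_2 as endomorphisms of ℤ[S_3]. -/
import Mathlib


open Finsupp

/-- The Coxeter length of a permutation of `Fin n`: the number of inversions. -/
def len {n : ℕ} (w : Equiv.Perm (Fin n)) : ℕ :=
  ((Finset.univ : Finset (Fin n × Fin n)).filter
    (fun p => p.1 < p.2 ∧ w p.2 < w p.1)).card

open Classical in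
/-- The Bruhat operator `[ij]` on the free `ℤ`-module with basis `S_n`:
`[ij]·w = w·s_{ij}` if `ℓ(w s_{ij}) = ℓ(w) + 1`, and `0` otherwise. -/
noncomputable def bruhatOp {n : ℕ} (i j : Fin n) :
    (Equiv.Perm (Fin n) →₀ ℤ) →ₗ[ℤ] (Equiv.Perm (Fin n) →₀ ℤ) :=
  Finsupp.lsum ℤ fun w =>
    if len (w * Equiv.swap i j) = len w + 1 then
      Finsupp.lsingle (w * Equiv.swap i j)
    else 0

/-- The Dunkl elements for `S_3` in the Bruhat representation:
`θ_1 = [12]+[13]`, `θ_2 = -[12]+[23]`, `θ_3 = -[13]-[23]` (0-indexed here). -/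
noncomputable def dunkl : Fin 3 → ((Equiv.Perm (Fin 3) →₀ ℤ) →ₗ[ℤ] (Equiv.Perm (Fin 3) →₀ ℤ))
  | 0 => bruhatOp 0 1 + bruhatOp 0 2
  | 1 => -bruhatOp 0 1 + bruhatOp 1 2
  | 2 => -bruhatOp 0 2 - bruhatOp 1 2

lemma bruhat_single {n : ℕ} (i j : Fin n) (w : Equiv.Perm (Fin n)) :
    bruhatOp i j (Finsupp.single w (1:ℤ)) =
    if len (w * Equiv.swap i j) = len w + 1 then Finsupp.single (w * Equiv.swap i j) 1 else 0 := by
  classical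
  simp only [bruhatOp, Finsupp.lsum_single]
  split <;> simp

lemma ext_single {f g : (Equiv.Perm (Fin 3) →₀ ℤ) →ₗ[ℤ] (Equiv.Perm (Fin 3) →₀ ℤ)}
    (h : ∀ w, f (Finsupp.single w 1) = g (Finsupp.single w 1)) : f = g := by
  apply Finsupp.lhom_ext
  intro w b
  have hb : Finsupp.single w b = b • Finsupp.single w (1:ℤ) := by simp
  rw [hb, map_smul, map_smul, h]

lemma perm_enum (w : Equiv.Perm (Fin 3)) :
    w = 1 ∨ w = Equiv.swap 0 1 ∨ w = Equiv.swap 1 2 ∨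
    w = Equiv.swap 0 1 * Equiv.swap 1 2 ∨ w = Equiv.swap 1 2 * Equiv.swap 0 1 ∨
    w = Equiv.swap 0 2 := by revert w; decide

lemma m0 : (1 : Equiv.Perm (Fin 3)) * (Equiv.swap (0:Fin 3) 1) = Equiv.swap (0:Fin 3) 1 := by decide
lemma m1 : (1 : Equiv.Perm (Fin 3)) * (Equiv.swap (0:Fin 3) 2) = Equiv.swap (0:Fin 3) 2 := by decide
lemma m2 : (1 : Equiv.Perm (Fin 3)) * (Equiv.swap (1:Fin 3) 2) = Equiv.swap (1:Fin 3) 2 := by decide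
lemma m3 : Equiv.swap (0:Fin 3) 1 * (Equiv.swap (0:Fin 3) 1) = (1 : Equiv.Perm (Fin 3)) := by decide
lemma m4 : Equiv.swap (0:Fin 3) 1 * (Equiv.swap (0:Fin 3) 2) = Equiv.swap (1:Fin 3) 2 * Equiv.swap 0 1 := by decide
lemma m5 : Equiv.swap (0:Fin 3) 1 * (Equiv.swap (1:Fin 3) 2) = Equiv.swap (0:Fin 3) 1 * Equiv.swap 1 2 := by decide
lemma m6 : Equiv.swap (1:Fin 3) 2 * (Equiv.swap (0:Fin 3) 1) = Equiv.swap (1:Fin 3) 2 * Equiv.swap 0 1 := by decide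
lemma m7 : Equiv.swap (1:Fin 3) 2 * (Equiv.swap (0:Fin 3) 2) = Equiv.swap (0:Fin 3) 1 * Equiv.swap 1 2 := by decide
lemma m8 : Equiv.swap (1:Fin 3) 2 * (Equiv.swap (1:Fin 3) 2) = (1 : Equiv.Perm (Fin 3)) := by decide
lemma m9 : Equiv.swap (0:Fin 3) 1 * Equiv.swap 1 2 * (Equiv.swap (0:Fin 3) 1) = Equiv.swap (0:Fin 3) 2 := by decide
lemma m10 : Equiv.swap (0:Fin 3) 1 * Equiv.swap 1 2 * (Equiv.swap (0:Fin 3) 2) = Equiv.swap (1:Fin 3) 2 := by decide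
lemma m11 : Equiv.swap (0:Fin 3) 1 * Equiv.swap 1 2 * (Equiv.swap (1:Fin 3) 2) = Equiv.swap (0:Fin 3) 1 := by decide
lemma m12 : Equiv.swap (1:Fin 3) 2 * Equiv.swap 0 1 * (Equiv.swap (0:Fin 3) 1) = Equiv.swap (1:Fin 3) 2 := by decide
lemma m13 : Equiv.swap (1:Fin 3) 2 * Equiv.swap 0 1 * (Equiv.swap (0:Fin 3) 2) = Equiv.swap (0:Fin 3) 1 := by decide
lemma m14 : Equiv.swap (1:Fin 3) 2 * Equiv.swap 0 1 * (Equiv.swap (1:Fin 3) 2) = Equiv.swap (0:Fin 3) 2 := by decide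
lemma m15 : Equiv.swap (0:Fin 3) 2 * (Equiv.swap (0:Fin 3) 1) = Equiv.swap (0:Fin 3) 1 * Equiv.swap 1 2 := by decide
lemma m16 : Equiv.swap (0:Fin 3) 2 * (Equiv.swap (0:Fin 3) 2) = (1 : Equiv.Perm (Fin 3)) := by decide
lemma m17 : Equiv.swap (0:Fin 3) 2 * (Equiv.swap (1:Fin 3) 2) = Equiv.swap (1:Fin 3) 2 * Equiv.swap 0 1 := by decide
lemma l0 : len ((1 : Equiv.Perm (Fin 3))) = 0 := by decide
lemma l1 : len (Equiv.swap (0:Fin 3) 1) = 1 := by decide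
lemma l2 : len (Equiv.swap (1:Fin 3) 2) = 1 := by decide
lemma l3 : len (Equiv.swap (0:Fin 3) 1 * Equiv.swap 1 2) = 2 := by decide
lemma l4 : len (Equiv.swap (1:Fin 3) 2 * Equiv.swap 0 1) = 2 := by decide
lemma l5 : len (Equiv.swap (0:Fin 3) 2) = 3 := by decide

/-- The Dunkl elements commute pairwise as endomorphisms of `ℤ[S_3]`. -/
theorem dunkl_comm :
    dunkl 0 ∘ₗ dunkl 1 = dunkl 1 ∘ₗ dunkl 0 ∧
    dunkl 0 ∘ₗ dunkl 2 = dunkl 2 ∘ₗ dunkl 0 ∧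
    dunkl 1 ∘ₗ dunkl 2 = dunkl 2 ∘ₗ dunkl 1 := by
  refine ⟨?_, ?_, ?_⟩ <;>
  · apply ext_single
    intro w
    rcases perm_enum w with rfl | rfl | rfl | rfl | rfl | rfl <;>
    · simp only [dunkl, LinearMap.comp_apply, LinearMap.add_apply, LinearMap.neg_apply,
        LinearMap.sub_apply, map_add, map_neg, map_sub, map_zero, bruhat_single,
        m0, m1, m2, m3, m4, m5, m6, m7, m8, m9, m10, m11, m12, m13, m14, m15, m16, m17,
        l0, l1, l2, l3, l4, l5, Nat.reduceAdd, show ((0:ℕ) = 1) = False by simp, show ((0:ℕ) = 2) = False by simp, show ((0:ℕ) = 3) = False by simp, show ((0:ℕ) = 4) = False by simp, show ((1:ℕ) = 1) = True by simp, show ((1:ℕ) = 2) = False by simp, show ((1:ℕ) = 3) = False by simp, show ((1:ℕ) = 4) = False by simp, show ((2:ℕ) = 1) = False by simp, show ((2:ℕ) = 2) = True by simp, show ((2:ℕ) = 3) = False by simp, show ((2:ℕ) = 4) = False by simp, show ((3:ℕ) = 1) = False by simp, show ((3:ℕ) = 2) = False by simp, show ((3:ℕ) = 3) = True by simp, show ((3:ℕ)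 = 4) = False by simp, ite_true, ite_false, if_true, if_false,
        neg_zero, add_zero, zero_add, sub_zero, zero_sub, neg_neg]
      try abel
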